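/- Let d ≥ 2, q an integer with |q| > 1, and A ⊆ Z^d finite of rank d. Let B ⊆ A have rank f with 1 ≤ f < d. Then there exist elements x_1, ..., x_{d-f} ∈ A such that the sets B + q·B, B + q·x_1, ..., B + q·x_{d-f} are pairwise disjoint; consequently |B + q·A| ≥ |B + q·B| + (d - f)|B|. -/

import Mathlib

open Pointwise

/-- The dilate `q · A = {q • a : a ∈ A}`. -/
def dil {d : ℕ} (q : ℤ) (A : Finset (Fin d → ℤ)) : Finset (Fin d → ℤ) :=
  A.image (fun a => q • a)

/-- The rank of a finite `A ⊆ ℤ^d`: the smallest dimension of an affine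
subspace containing `A`. -/
noncomputable def rk {d : ℕ} (A : Finset (Fin d → ℤ)) : ℕ :=
  Module.finrank ℚ
    (vectorSpan ℚ ((fun v : Fin d → ℤ => fun i : Fin d => (v i : ℚ)) '' (A : Set (Fin d → ℤ))))

theorem lower_rank_subset_bound {d : ℕ} (hd : 2 ≤ d) (q : ℤ) (hq : 1 < |q|)
    (A : Finset (Fin d → ℤ)) (hrkA : rk A = d)
    (B : Finset (Fin d → ℤ)) (hBA : B ⊆ A)
    (f : ℕ) (hrkB : rk B = f) (hf : 1 ≤ f) (hfd : f < d) :
    ∃ x : Fin (d - f) → (Fin d → ℤ),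
      (∀ k, x k ∈ A) ∧
      (∀ k, Disjoint (B + dil q B) (B + {q • x k})) ∧
      (∀ k l, k ≠ l → Disjoint (B + ({q • x k} : Finset (Fin d → ℤ))) (B + {q • x l})) ∧
      (B + dil q A).card ≥ (B + dil q B).card + (d - f) * B.card := by
  classical
  have hB : B.Nonempty := by
    rcases B.eq_empty_or_nonempty with h | h
    · exfalso
      subst h
      have h0 : rk (∅ : Finset (Fin d → ℤ)) = 0 := by
        have he : (vectorSpan ℚ ((fun v : Fin d → ℤ => fun i : Fin d => (v i : ℚ)) ''
            ((∅ : Finset (Fin d → ℤ)) : Set (Fin d → ℤ)))) = ⊥ := by simp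
        unfold rk
        rw [he]
        exact finrank_bot ℚ _
      rw [h0] at hrkB
      omega
    · exact h
  set ι : (Fin d → ℤ) → (Fin d → ℚ) := fun v i => (v i : ℚ) with hιdef
  have hιadd : ∀ u v : Fin d → ℤ, ι (u + v) = ι u + ι v := by
    intro u v; funext i; simp [hιdef]
  have hιsmul : ∀ v : Fin d → ℤ, ι (q • v) = (q : ℚ) • ι v := by
    intro v; funext i; simp [hιdef]
  have hq0 : (q : ℚ) ≠ 0 := by
    have : q ≠ 0 := by rintro rfl; simp at hq
    exact_mod_cast this
  set V : Submodule ℚ (Fin d → ℚ) := vectorSpan ℚ (ι '' (B : Set (Fin d → ℤ))) with hV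
  obtain ⟨b0, hb0⟩ := hB
  have hdiff : ∀ b1 ∈ B, ∀ b2 ∈ B, ι b1 - ι b2 ∈ V := by
    intro b1 h1 b2 h2
    have := vsub_mem_vectorSpan ℚ (Set.mem_image_of_mem ι (by exact_mod_cast h1))
      (Set.mem_image_of_mem ι (by exact_mod_cast h2))
    simpa [vsub_eq_sub] using this
  have hVrank : Module.finrank ℚ V = f := hrkB
  have hAtop : vectorSpan ℚ (ι '' (A : Set (Fin d → ℤ))) = ⊤ := by
    apply Submodule.eq_top_of_finrank_eq
    rw [Module.finrank_fin_fun (R := ℚ)]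
    exact hrkA
  -- key selection
  have key : ∀ n : ℕ, f + n ≤ d → ∃ x : Fin n → (Fin d → ℤ),
      (∀ k, x k ∈ A) ∧ (∀ k, ι (x k) - ι b0 ∉ V) ∧
      (∀ k l, k ≠ l → ι (x k) - ι (x l) ∉ V) := by
    intro n
    induction n with
    | zero => exact fun _ => ⟨fun k => b0, fun k => k.elim0, fun k => k.elim0,
        fun k => k.elim0⟩
    | succ n ih =>
      intro hn
      obtain ⟨x, hxA, hx0, hxp⟩ := ih (by omega)
      set S : Submodule ℚ (Fin d → ℚ) :=
        Submodule.span ℚ (Set.range (fun k : Fin n => ι (x k) - ι b0)) with hS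
      set W : Submodule ℚ (Fin d → ℚ) := V ⊔ S with hW
      have hWrank : Module.finrank ℚ W ≤ f + n := by
        refine le_trans (Submodule.finrank_add_le_finrank_add_finrank V S) ?_
        have hS' : Module.finrank ℚ S ≤ n := by
          have := finrank_range_le_card (R := ℚ) (fun k : Fin n => ι (x k) - ι b0); rw [Fintype.card_fin] at this; exact this
        omega
      have hex : ∃ a ∈ A, ι a - ι b0 ∉ W := by
        by_contra hcon
        push_neg at hcon
        have hle : vectorSpan ℚ (ι '' (A : Set (Fin d → ℤ))) ≤ W := by
          rw [vectorSpan_eq_span_vsub_set_right ℚ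
            (Set.mem_image_of_mem ι (by exact_mod_cast hBA hb0))]
          rw [Submodule.span_le]
          rintro _ ⟨_, ⟨a, ha, rfl⟩, rfl⟩
          simpa [vsub_eq_sub] using hcon a (by exact_mod_cast ha)
        rw [hAtop, top_le_iff] at hle
        have : Module.finrank ℚ W = d := by
          rw [hle]
          simpa using (Module.finrank_fin_fun ℚ (n := d))
        omega
      obtain ⟨a, haA, haW⟩ := hex
      have hVW : V ≤ W := le_sup_left
      have hSW : S ≤ W := le_sup_right
      have haxi : ∀ i : Fin n, ι a - ι (x i) ∉ V := by
        intro i hmem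
        apply haW
        have h1 : ι (x i) - ι b0 ∈ S :=
          Submodule.subset_span ⟨i, rfl⟩
        have h2 : ι a - ι b0 = (ι a - ι (x i)) + (ι (x i) - ι b0) := by abel
        rw [h2]
        exact W.add_mem (hVW hmem) (hSW h1)
      refine ⟨Fin.cons a x, ?_, ?_, ?_⟩
      · intro k
        rcases Fin.eq_zero_or_eq_succ k with rfl | ⟨i, rfl⟩
        · simpa using haA
        · simpa using hxA i
      · intro k hmem
        rcases Fin.eq_zero_or_eq_succ k with rfl | ⟨i, rfl⟩
        · rw [Fin.cons_zero] at hmem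
          exact haW (hVW hmem)
        · rw [Fin.cons_succ] at hmem
          exact hx0 i hmem
      · intro k l hkl hmem
        rcases Fin.eq_zero_or_eq_succ k with rfl | ⟨i, rfl⟩ <;>
          rcases Fin.eq_zero_or_eq_succ l with rfl | ⟨j, rfl⟩
        · exact hkl rfl
        · rw [Fin.cons_zero, Fin.cons_succ] at hmem
          exact haxi j hmem
        · rw [Fin.cons_zero, Fin.cons_succ] at hmem
          exact haxi i (by simpa [neg_sub] using V.neg_mem hmem)
        · rw [Fin.cons_succ, Fin.cons_succ] at hmem
          exact hxp i j (fun h => hkl (by rw [h])) hmem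
  obtain ⟨x, hxA, hx0, hxp⟩ := key (d - f) (by omega)
  -- disjointness lemma helper
  have hdil : ∀ {z : Fin d → ℤ} {C : Finset (Fin d → ℤ)}, z ∈ dil q C →
      ∃ c ∈ C, z = q • c := by
    intro z C hz
    obtain ⟨c, hc, rfl⟩ := Finset.mem_image.1 hz
    exact ⟨c, hc, rfl⟩
  have hdisj1 : ∀ k, Disjoint (B + dil q B) (B + {q • x k}) := by
    intro k
    rw [Finset.disjoint_left]
    rintro z hz1 hz2
    obtain ⟨b1, hb1, c, hc, rfl⟩ := Finset.mem_add.1 hz1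
    obtain ⟨b2, hb2, rfl⟩ := hdil hc
    obtain ⟨b3, hb3, c', hc', heq⟩ := Finset.mem_add.1 hz2
    rw [Finset.mem_singleton.1 hc'] at heq
    have hQ : ι b1 + (q:ℚ) • ι b2 = ι b3 + (q:ℚ) • ι (x k) := by
      rw [← hιsmul, ← hιsmul, ← hιadd, ← hιadd, heq]
    have hmem : (q:ℚ) • (ι (x k) - ι b2) ∈ V := by
      have : (q:ℚ) • (ι (x k) - ι b2) = ι b1 - ι b3 := by
        rw [smul_sub, sub_eq_sub_iff_add_eq_add, hQ, add_comm]
      rw [this]; exact hdiff b1 hb1 b3 hb3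
    have hmem2 : ι (x k) - ι b2 ∈ V := by
      have := V.smul_mem (q:ℚ)⁻¹ hmem
      rwa [inv_smul_smul₀ hq0] at this
    apply hx0 k
    have : ι (x k) - ι b0 = (ι (x k) - ι b2) + (ι b2 - ι b0) := by abel
    rw [this]
    exact V.add_mem hmem2 (hdiff b2 hb2 b0 hb0)
  have hdisj2 : ∀ k l, k ≠ l →
      Disjoint (B + ({q • x k} : Finset (Fin d → ℤ))) (B + {q • x l}) := by
    intro k l hkl
    rw [Finset.disjoint_left]
    rintro z hz1 hz2
    obtain ⟨b1, hb1, c, hc, heq1⟩ := Finset.mem_add.1 hz1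
    obtain ⟨b2, hb2, c', hc', heq2⟩ := Finset.mem_add.1 hz2
    rw [Finset.mem_singleton.1 hc] at heq1
    rw [Finset.mem_singleton.1 hc'] at heq2
    have heq : b1 + q • x k = b2 + q • x l := by rw [heq1, heq2]
    have hQ : ι b1 + (q:ℚ) • ι (x k) = ι b2 + (q:ℚ) • ι (x l) := by
      rw [← hιsmul, ← hιsmul, ← hιadd, ← hιadd, heq]
    have hmem : (q:ℚ) • (ι (x k) - ι (x l)) ∈ V := by
      have : (q:ℚ) • (ι (x k) - ι (x l)) = ι b2 - ι b1 := by
        rw [smul_sub, sub_eq_sub_iff_add_eq_add, add_comm]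
        exact hQ
      rw [this]; exact hdiff b2 hb2 b1 hb1
    have hmem2 : ι (x k) - ι (x l) ∈ V := by
      have := V.smul_mem (q:ℚ)⁻¹ hmem
      rwa [inv_smul_smul₀ hq0] at this
    exact hxp k l hkl hmem2
  refine ⟨x, hxA, hdisj1, hdisj2, ?_⟩
  -- cardinality
  have hsub1 : B + dil q B ⊆ B + dil q A :=
    Finset.add_subset_add_left (Finset.image_subset_image hBA)
  have hsub2 : ∀ k, B + ({q • x k} : Finset (Fin d → ℤ)) ⊆ B + dil q A := by
    intro k
    apply Finset.add_subset_add_left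
    rw [Finset.singleton_subset_iff]
    exact Finset.mem_image.2 ⟨x k, hxA k, rfl⟩
  have hcard : ∀ k, (B + ({q • x k} : Finset (Fin d → ℤ))).card = B.card := by
    intro k
    rw [Finset.add_singleton]
    exact Finset.card_image_of_injective _ (add_left_injective _)
  set U : Finset (Fin d → ℤ) :=
    (B + dil q B) ∪ Finset.univ.biUnion (fun k : Fin (d - f) => B + {q • x k}) with hU
  have hUsub : U ⊆ B + dil q A := by
    apply Finset.union_subset hsub1
    apply Finset.biUnion_subset.2
    intro k _
    exact hsub2 k
  have hUcard : U.card = (B + dil q B).card + (d - f) * B.card := by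
    rw [hU, Finset.card_union_of_disjoint, Finset.card_biUnion]
    · congr 1
      rw [Finset.sum_congr rfl (fun k _ => hcard k)]
      simp [mul_comm]
    · intro a _ b _ hab
      exact hdisj2 a b hab
    · rw [Finset.disjoint_biUnion_right]
      intro k _
      exact hdisj1 k
  calc (B + dil q B).card + (d - f) * B.card = U.card := hUcard.symm
    _ ≤ (B + dil q A).card := Finset.card_le_card hUsub
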